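/- Let $H, K$ be Hilbert spaces, $V : H \to K$ an isometry, $\pi : B \to B(K)$ a unital *-homomorphism from a C*-algebra $B$, and define $\varphi : B \to B(H)$ by $\varphi(x) = V^* \pi(x) V$. Let $P = VV^*$ and let $e \in B$ be such that $\|\varphi(ee^*) - \varphi(e)\varphi(e^*)\| < \delta$ and $\|\varphi(e^*e) - \varphi(e^*)\varphi(e)\| < \delta$ for some $\delta > 0$. Then $\|P\pi(e) - \pi(e)P\| < \sqrt{\delta}$. -/

import Mathlib

open ContinuousLinearMap in
/-- Stinespring-type estimate: if `φ(x) = V* π(x) V` for an isometry `V` and a unital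
*-homomorphism `π`, and `φ` is approximately multiplicative at `e` and `e*` within `δ`, then
the Stinespring projection `P = V V*` almost commutes with `π(e)`: `‖Pπ(e) - π(e)P‖ < √δ`. -/
theorem stinespring_projection_almost_commutes
    {H K : Type*} [NormedAddCommGroup H] [InnerProductSpace ℂ H] [CompleteSpace H]
    [NormedAddCommGroup K] [InnerProductSpace ℂ K] [CompleteSpace K]
    {B : Type*} [NormedRing B] [StarRing B] [CStarRing B] [NormedAlgebra ℂ B]
    (V : H →L[ℂ] K) (hV : ∀ h : H, ‖V h‖ = ‖h‖)
    (π : B →⋆ₐ[ℂ] (K →L[ℂ] K))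
    (φ : B → (H →L[ℂ] H))
    (hφ : ∀ x : B, φ x = (ContinuousLinearMap.adjoint V).comp ((π x).comp V))
    (e : B) (δ : ℝ) (hδ : 0 < δ)
    (h1 : ‖φ (e * star e) - φ e * φ (star e)‖ < δ)
    (h2 : ‖φ (star e * e) - φ (star e) * φ e‖ < δ) :
    ‖(V.comp (ContinuousLinearMap.adjoint V)) * π e
        - π e * (V.comp (ContinuousLinearMap.adjoint V))‖ < Real.sqrt δ := by
  have hinner : ∀ x y : H, (inner ℂ (V x) (V y) : ℂ) = inner ℂ x y := by
    intro x y
    exact (⟨V.toLinearMap, hV⟩ : H →ₗᵢ[ℂ] K).inner_map_map x y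
  have hVV : ∀ x : H, ContinuousLinearMap.adjoint V (V x) = x := by
    intro x
    refine ext_inner_right ℂ fun y => ?_
    rw [ContinuousLinearMap.adjoint_inner_left, hinner]
  set a : K →L[ℂ] K := π e with ha
  set P : K →L[ℂ] K := V.comp (ContinuousLinearMap.adjoint V) with hP
  set Q : K →L[ℂ] K := ContinuousLinearMap.id ℂ K - P with hQ
  have hadjP : ContinuousLinearMap.adjoint P = P := by
    rw [hP, ContinuousLinearMap.adjoint_comp, ContinuousLinearMap.adjoint_adjoint]
  have hadjQ : ContinuousLinearMap.adjoint Q = Q := by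
    rw [hQ, map_sub, ContinuousLinearMap.adjoint_id, hadjP]
  have haSt : π (star e) = ContinuousLinearMap.adjoint a := by
    rw [map_star]; rfl
  set C : H →L[ℂ] K := Q.comp (a.comp V) with hC
  set D : H →L[ℂ] K := Q.comp ((ContinuousLinearMap.adjoint a).comp V) with hD
  have hCC : (ContinuousLinearMap.adjoint C).comp C = φ (star e * e) - φ (star e) * φ e := by
    rw [hC, hφ, hφ, hφ, map_mul, haSt]
    ext x
    simp [ContinuousLinearMap.adjoint_comp, hadjQ, hQ, hP, hVV, map_sub]
    rfl
  have hDD : (ContinuousLinearMap.adjoint D).comp D = φ (e * star e) - φ e * φ (star e) := by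
    rw [hD, hφ, hφ, hφ, map_mul, haSt]
    ext x
    simp [ContinuousLinearMap.adjoint_comp, hadjQ, hQ, hP, hVV, map_sub,
      ContinuousLinearMap.adjoint_adjoint]
    rfl
  set m : ℝ := max ‖φ (star e * e) - φ (star e) * φ e‖ ‖φ (e * star e) - φ e * φ (star e)‖
    with hm
  have hm0 : 0 ≤ m := le_max_of_le_left (norm_nonneg _)
  have hmδ : m < δ := max_lt h2 h1
  have hCn : ‖C‖ * ‖C‖ ≤ m := by
    rw [← ContinuousLinearMap.norm_adjoint_comp_self, hCC]; exact le_max_left _ _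
  have hDn : ‖D‖ * ‖D‖ ≤ m := by
    rw [← ContinuousLinearMap.norm_adjoint_comp_self, hDD]; exact le_max_right _ _
  -- orthogonality of ranges of P and Q
  have horth : ∀ w1 w2 : K, (inner ℂ (P w1) (Q w2) : ℂ) = 0 := by
    intro w1 w2
    have hPQ : P (Q w2) = 0 := by simp [hQ, hP, hVV, map_sub]
    rw [← hadjP, ContinuousLinearMap.adjoint_inner_left, hPQ, inner_zero_right]
  have key : ∀ h : K,
      ‖((P * a) - (a * P)) h‖ ≤ Real.sqrt m * ‖h‖ := by
    intro h
    set u : K := P (a (Q h)) with hu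
    set v : K := Q (a (P h)) with hv
    have hT : ((P * a) - (a * P)) h = u - v := by
      simp only [hu, hv, hQ, ContinuousLinearMap.sub_apply, ContinuousLinearMap.mul_apply,
        ContinuousLinearMap.id_apply, map_sub]
      abel
    -- Pythagoras for u - v
    have huv : ‖u - v‖ ^ 2 = ‖u‖ ^ 2 + ‖v‖ ^ 2 := by
      have h0 : (inner ℂ u (-v) : ℂ) = 0 := by rw [inner_neg_right, horth, neg_zero]
      simpa [sub_eq_add_neg, pow_two] using
        norm_add_sq_eq_norm_sq_add_norm_sq_of_inner_eq_zero u (-v) h0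
    -- Pythagoras for h
    have hh : ‖h‖ ^ 2 = ‖P h‖ ^ 2 + ‖Q h‖ ^ 2 := by
      have hpyth := norm_add_sq_eq_norm_sq_add_norm_sq_of_inner_eq_zero (P h) (Q h) (horth h h)
      have hsum : P h + Q h = h := by simp [hQ]
      rw [hsum] at hpyth
      simpa [pow_two] using hpyth
    -- bound on u
    have hu_le : ‖u‖ ≤ ‖D‖ * ‖Q h‖ := by
      have h1 : u = V (ContinuousLinearMap.adjoint D (Q h)) := by
        simp only [hu, hD, ContinuousLinearMap.adjoint_comp, hadjQ,
          ContinuousLinearMap.adjoint_adjoint, ContinuousLinearMap.comp_apply]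
        have hQQh : Q (Q h) = Q h := by simp [hQ, hP, hVV, map_sub]
        rw [hQQh]
        rfl
      rw [h1, hV]
      calc ‖ContinuousLinearMap.adjoint D (Q h)‖
          ≤ ‖ContinuousLinearMap.adjoint D‖ * ‖Q h‖ := le_opNorm _ _
        _ = ‖D‖ * ‖Q h‖ := by rw [LinearIsometryEquiv.norm_map]
    -- bound on v
    have hv_le : ‖v‖ ≤ ‖C‖ * ‖P h‖ := by
      have h1 : v = C (ContinuousLinearMap.adjoint V h) := by
        simp [hv, hC, hP]
      have h2 : ‖ContinuousLinearMap.adjoint V h‖ = ‖P h‖ := by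
        rw [hP, ContinuousLinearMap.comp_apply, hV]
      rw [h1, ← h2]
      exact le_opNorm _ _
    have hsq : ‖((P * a) - (a * P)) h‖ ^ 2 ≤ m * ‖h‖ ^ 2 := by
      rw [hT, huv, hh]
      have e1 : ‖u‖ ^ 2 ≤ m * ‖Q h‖ ^ 2 := by
        calc ‖u‖ ^ 2 ≤ (‖D‖ * ‖Q h‖) ^ 2 := pow_le_pow_left₀ (norm_nonneg _) hu_le 2
          _ = ‖D‖ * ‖D‖ * ‖Q h‖ ^ 2 := by ring
          _ ≤ m * ‖Q h‖ ^ 2 := mul_le_mul_of_nonneg_right hDn (sq_nonneg _)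
      have e2 : ‖v‖ ^ 2 ≤ m * ‖P h‖ ^ 2 := by
        calc ‖v‖ ^ 2 ≤ (‖C‖ * ‖P h‖) ^ 2 := pow_le_pow_left₀ (norm_nonneg _) hv_le 2
          _ = ‖C‖ * ‖C‖ * ‖P h‖ ^ 2 := by ring
          _ ≤ m * ‖P h‖ ^ 2 := mul_le_mul_of_nonneg_right hCn (sq_nonneg _)
      rw [mul_add]
      linarith
    have := Real.sqrt_le_sqrt hsq
    rwa [Real.sqrt_sq (norm_nonneg _), Real.sqrt_mul hm0, Real.sqrt_sq (norm_nonneg _)]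
      at this
  have hle : ‖(P * a) - (a * P)‖ ≤ Real.sqrt m :=
    ContinuousLinearMap.opNorm_le_bound _ (Real.sqrt_nonneg _) key
  exact lt_of_le_of_lt hle (Real.sqrt_lt_sqrt hm0 hmδ)
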